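/- Let η : [0,1] → A be continuous and suppose L ∈ A satisfies exp(L) = Hol_η. Define h : [0,1] → A by h(θ) := Ψ_η(θ)·exp(−θL). Then: (i) h(θ) is invertible for every θ; (ii) h(0) = 1 and h(1) = 1, so h is a based loop of gauge transformations; and (iii) h transforms η into the constant connection −L, i.e. h(θ)⁻¹ η(θ) h(θ) + h(θ)⁻¹ h'(θ) = −L for all θ ∈ [0,1]. -/

import Mathlib

open Set

private lemma holonomy_step {A : Type*} [NormedRing A] [NormedAlgebra ℝ A] [NormOneClass A]
    [CompleteSpace A] {η Ψ : ℝ → A} {M δ a : ℝ}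
    (hM0 : 0 ≤ M) (hM : ∀ t ∈ Icc (0:ℝ) 1, ‖η t‖ ≤ M)
    (hδ : δ = ((M + 1) * (Real.exp M + 1))⁻¹)
    (hη : ContinuousOn η (Icc 0 1))
    (hΨ : ∀ θ ∈ Icc (0:ℝ) 1, HasDerivWithinAt Ψ (-(η θ * Ψ θ)) (Icc (0:ℝ) 1) θ)
    (ha : a ∈ Icc (0:ℝ) 1) (hua : IsUnit (Ψ a)) :
    ∀ t ∈ Icc a (min (a + δ) 1), IsUnit (Ψ t) := by
  have hE1 : (1:ℝ) ≤ Real.exp M := Real.one_le_exp hM0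
  have hden : 0 < (M + 1) * (Real.exp M + 1) := by nlinarith
  have hδ0 : 0 < δ := by rw [hδ]; exact inv_pos.2 hden
  have hδ1 : δ * ((M + 1) * (Real.exp M + 1)) = 1 := by
    rw [hδ]; exact inv_mul_cancel₀ hden.ne'
  have hδle1 : δ ≤ 1 := by nlinarith
  set b := min (a + δ) 1 with hb
  have hab : a ≤ b := le_min (by linarith) ha.2
  have hsub : Icc a b ⊆ Icc (0:ℝ) 1 := Icc_subset_Icc ha.1 (min_le_right _ _)
  have hba : b - a ≤ δ := by
    have := min_le_left (a + δ) 1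
    simp only [hb]; linarith
  set c : ℝ → ℝ := fun t => min (max t 0) 1 with hc
  have hcmem : ∀ t, c t ∈ Icc (0:ℝ) 1 :=
    fun t => ⟨le_min (le_max_right _ _) zero_le_one, min_le_right _ _⟩
  have hceq : ∀ t ∈ Icc a b, c t = t := by
    intro t ht
    have h1 := hsub ht
    simp only [hc]
    rw [max_eq_left h1.1, min_eq_left h1.2]
  set v : ℝ → A → A := fun t x => -(η (c t) * x) with hv
  have hMc : ∀ t, ‖η (c t)‖ ≤ M := fun t => hM _ (hcmem t)
  have hlip : ∀ t, LipschitzWith M.toNNReal (v t) := by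
    intro t
    apply LipschitzWith.of_dist_le_mul
    intro x y
    rw [dist_eq_norm, dist_eq_norm]
    have hxy : v t x - v t y = -(η (c t) * (x - y)) := by
      simp only [hv]; noncomm_ring
    rw [hxy, norm_neg, Real.coe_toNNReal M hM0]
    calc ‖η (c t) * (x - y)‖ ≤ ‖η (c t)‖ * ‖x - y‖ := norm_mul_le _ _
      _ ≤ M * ‖x - y‖ := mul_le_mul_of_nonneg_right (hMc t) (norm_nonneg _)
  have hvnorm : ∀ t x, ‖v t x‖ ≤ M * ‖x‖ := by
    intro t x
    simp only [hv, norm_neg]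
    calc ‖η (c t) * x‖ ≤ ‖η (c t)‖ * ‖x‖ := norm_mul_le _ _
      _ ≤ M * ‖x‖ := mul_le_mul_of_nonneg_right (hMc t) (norm_nonneg _)
  have hpl : IsPicardLindelof v (tmin := a) (tmax := b) ⟨a, ⟨le_rfl, hab⟩⟩ (1:A) 1 0
      (2 * M).toNNReal M.toNNReal := by
    refine ⟨fun t _ => (hlip t).lipschitzOnWith, ?_, ?_, ?_⟩
    · intro x _
      apply ContinuousOn.neg
      apply ContinuousOn.mul _ continuousOn_const
      apply hη.comp
      · exact ((continuous_id.max continuous_const).min continuous_const).continuousOn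
      · exact fun t _ => hcmem t
    · intro t _ x hx
      have hxn : ‖x‖ ≤ 2 := by
        have h1 : ‖x - 1‖ ≤ 1 := by simpa using mem_closedBall_iff_norm.mp hx
        calc ‖x‖ = ‖x - 1 + 1‖ := by rw [sub_add_cancel]
          _ ≤ ‖x - 1‖ + ‖(1:A)‖ := norm_add_le _ _
          _ ≤ 2 := by rw [norm_one]; linarith
      rw [Real.coe_toNNReal _ (by positivity)]
      calc ‖v t x‖ ≤ M * ‖x‖ := hvnorm t x
        _ ≤ 2 * M := by nlinarith
    · simp only [Real.coe_toNNReal _ (by positivity : (0:ℝ) ≤ 2 * M), NNReal.coe_one,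
        NNReal.coe_zero, sub_zero, sub_self]
      rw [max_eq_left (by linarith : (0:ℝ) ≤ b - a)]
      nlinarith
  obtain ⟨W, hW0, hWd⟩ := hpl.exists_eq_forall_mem_Icc_hasDerivWithinAt₀
  have hW0 : W a = 1 := hW0
  have hWc : ContinuousOn W (Icc a b) := fun t ht => (hWd t ht).continuousWithinAt
  have hWd' : ∀ t ∈ Ico a b, HasDerivWithinAt W (v t (W t)) (Ici t) t :=
    fun t ht => (hWd t (Ico_subset_Icc_self ht)).mono_of_mem_nhdsWithin
      (Icc_mem_nhdsGE_of_mem ht)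
  have hWnorm : ∀ t ∈ Icc a b, ‖W t‖ ≤ Real.exp M := by
    intro t ht
    have hbnd : ∀ x ∈ Ico a b, ‖v x (W x)‖ ≤ M * ‖W x‖ + 0 := by
      intro x _; rw [add_zero]; exact hvnorm x (W x)
    have := norm_le_gronwallBound_of_norm_deriv_right_le hWc hWd'
      (by rw [hW0, norm_one]) hbnd t ht
    rw [gronwallBound_ε0, one_mul] at this
    refine this.trans (Real.exp_le_exp.2 ?_)
    have h1 : t - a ≤ δ := by linarith [ht.2]
    nlinarith
  have hWone : ∀ t ∈ Icc a b, ‖W t - 1‖ < 1 := by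
    intro t ht
    have hbnd : ∀ x ∈ Ico a b, ‖v x (W x)‖ ≤ 0 * ‖W x - 1‖ + M * Real.exp M := by
      intro x hx
      rw [zero_mul, zero_add]
      calc ‖v x (W x)‖ ≤ M * ‖W x‖ := hvnorm x (W x)
        _ ≤ M * Real.exp M :=
          mul_le_mul_of_nonneg_left (hWnorm x (Ico_subset_Icc_self hx)) hM0
    have hb2 := norm_le_gronwallBound_of_norm_deriv_right_le
      (f := fun t => W t - 1) (f' := fun t => v t (W t))
      (hWc.sub continuousOn_const)
      (fun x hx => (hWd' x hx).sub_const 1)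
      (by show ‖W a - 1‖ ≤ (0:ℝ); rw [hW0, sub_self, norm_zero]) hbnd t ht
    simp only [gronwallBound_K0, zero_add] at hb2
    have ht' : t - a ≤ δ := by linarith [ht.2]
    have ht0 : 0 ≤ t - a := by linarith [ht.1]
    have hME : 0 ≤ M * Real.exp M := mul_nonneg hM0 (Real.exp_pos M).le
    have h2 : M * Real.exp M * (t - a) ≤ M * Real.exp M * δ :=
      mul_le_mul_of_nonneg_left ht' hME
    have h3 : M * Real.exp M * δ < 1 := by nlinarith [Real.exp_pos M]
    calc ‖W t - 1‖ ≤ M * Real.exp M * (t - a) := hb2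
      _ ≤ M * Real.exp M * δ := h2
      _ < 1 := h3
  have hWu : ∀ t ∈ Icc a b, IsUnit (W t) := by
    intro t ht
    have hlt : ‖(1:A) - W t‖ < 1 := by rw [norm_sub_rev]; exact hWone t ht
    exact ⟨Units.oneSub _ hlt, by simp [Units.oneSub, sub_sub_cancel]⟩
  have hΨc : ContinuousOn Ψ (Icc a b) :=
    fun t ht => ((hΨ t (hsub ht)).continuousWithinAt).mono hsub
  have hΨd' : ∀ t ∈ Ico a b, HasDerivWithinAt Ψ (v t (Ψ t)) (Ici t) t := by
    intro t ht
    have h01 : t ∈ Ico (0:ℝ) 1 := ⟨ha.1.trans ht.1, lt_of_lt_of_le ht.2 (min_le_right _ _)⟩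
    have hd := (hΨ t (hsub (Ico_subset_Icc_self ht))).mono_of_mem_nhdsWithin
      (Icc_mem_nhdsGE_of_mem h01)
    have : v t (Ψ t) = -(η t * Ψ t) := by
      simp only [hv, hceq t (Ico_subset_Icc_self ht)]
    rw [this]
    exact hd
  have hgd' : ∀ t ∈ Ico a b,
      HasDerivWithinAt (fun t => W t * Ψ a) (v t (W t * Ψ a)) (Ici t) t := by
    intro t ht
    have hd := (hWd' t ht).mul_const (Ψ a)
    have : v t (W t * Ψ a) = v t (W t) * Ψ a := by
      simp only [hv, neg_mul, mul_assoc]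
    rw [this]
    exact hd
  have heq := ODE_solution_unique hlip hΨc hΨd' (hWc.mul continuousOn_const) hgd'
    (by rw [Pi.mul_apply, hW0, one_mul])
  intro t ht
  rw [heq ht]
  exact (hWu t ht).mul hua

private lemma psi_unit {A : Type*} [NormedRing A] [NormedAlgebra ℝ A] [NormOneClass A]
    [CompleteSpace A] (η Ψ : ℝ → A)
    (hη : ContinuousOn η (Icc 0 1))
    (hΨ : ∀ θ ∈ Icc (0:ℝ) 1, HasDerivWithinAt Ψ (-(η θ * Ψ θ)) (Icc (0:ℝ) 1) θ)
    (hΨ0 : Ψ 0 = 1) : ∀ θ ∈ Icc (0:ℝ) 1, IsUnit (Ψ θ) := by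
  obtain ⟨M₀, hM₀⟩ := isCompact_Icc.exists_bound_of_continuousOn hη
  set M := max M₀ 0 with hMdef
  have hM0 : 0 ≤ M := le_max_right _ _
  have hM : ∀ t ∈ Icc (0:ℝ) 1, ‖η t‖ ≤ M := fun t ht => (hM₀ t ht).trans (le_max_left _ _)
  set δ := ((M + 1) * (Real.exp M + 1))⁻¹ with hδ
  have hδ0 : 0 < δ := by
    rw [hδ]
    have hE1 : (1:ℝ) ≤ Real.exp M := Real.one_le_exp hM0
    apply inv_pos.2
    nlinarith
  have ind : ∀ n : ℕ, ∀ t ∈ Icc (0:ℝ) (min ((n:ℝ) * δ) 1), IsUnit (Ψ t) := by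
    intro n
    induction n with
    | zero =>
      intro t ht
      have ht2 : t ≤ 0 := by
        have := ht.2
        simpa using this
      have : t = 0 := le_antisymm ht2 ht.1
      rw [this, hΨ0]; exact isUnit_one
    | succ n ih =>
      intro t ht
      by_cases hcase : t ≤ min ((n:ℝ) * δ) 1
      · exact ih t ⟨ht.1, hcase⟩
      · push_neg at hcase
        have ht1 : t ≤ 1 := ht.2.trans (min_le_right _ _)
        have hn1 : (n:ℝ) * δ < 1 := by
          by_contra hge
          push_neg at hge
          rw [min_eq_right hge] at hcase
          linarith
        have hmin : min ((n:ℝ) * δ) 1 = (n:ℝ) * δ := min_eq_left hn1.le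
        have hn0 : 0 ≤ (n:ℝ) * δ := mul_nonneg (Nat.cast_nonneg n) hδ0.le
        have hua : IsUnit (Ψ ((n:ℝ) * δ)) := ih _ ⟨hn0, by rw [hmin]⟩
        refine holonomy_step hM0 hM hδ hη hΨ ⟨hn0, hn1.le⟩ hua t ⟨?_, ?_⟩
        · rw [hmin] at hcase; exact hcase.le
        · have ht2 := ht.2
          push_cast at ht2
          have : ((n:ℝ) + 1) * δ = (n:ℝ) * δ + δ := by ring
          rw [this] at ht2
          exact ht2
  obtain ⟨n, hn⟩ := exists_nat_ge (1 / δ)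
  intro θ hθ
  have h1 : (1:ℝ) ≤ (n:ℝ) * δ := by
    rw [div_le_iff₀ hδ0] at hn
    linarith
  exact ind n θ ⟨hθ.1, by rw [min_eq_right h1]; exact hθ.2⟩

/-- If `exp(L) = Hol_η`, then `h(θ) := Ψ_η(θ)·exp(-θL)` is a based loop of gauge
transformations which transforms `η` into the constant connection `-L`. -/
theorem stmt_4 {A : Type*} [NormedRing A] [NormedAlgebra ℝ A] [NormOneClass A]
    [CompleteSpace A] (η Ψ : ℝ → A) (L : A) (hη : ContinuousOn η (Icc 0 1))
    -- Ψ is the horizontal path of η, so that Hol_η = Ψ 1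
    (hΨ : ∀ θ ∈ Icc (0:ℝ) 1, HasDerivWithinAt Ψ (-(η θ * Ψ θ)) (Icc (0:ℝ) 1) θ)
    (hΨ0 : Ψ 0 = 1)
    (hL : NormedSpace.exp L = Ψ 1)
    (h : ℝ → A) (hdef : ∀ θ, h θ = Ψ θ * NormedSpace.exp (-(θ • L))) :
    (∀ θ ∈ Icc (0:ℝ) 1, IsUnit (h θ)) ∧
    h 0 = 1 ∧ h 1 = 1 ∧
    (∃ Dh : ℝ → A,
      (∀ θ ∈ Icc (0:ℝ) 1, HasDerivWithinAt h (Dh θ) (Icc (0:ℝ) 1) θ) ∧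
      (∀ θ ∈ Icc (0:ℝ) 1,
        Ring.inverse (h θ) * η θ * h θ + Ring.inverse (h θ) * Dh θ = -L)) := by
  have hΨu : ∀ θ ∈ Icc (0:ℝ) 1, IsUnit (Ψ θ) := psi_unit η Ψ hη hΨ hΨ0
  have hfun : ∀ x : ℝ, h x = Ψ x * NormedSpace.exp (x • (-L)) := by
    intro x; rw [hdef, smul_neg]
  have hh0 : h 0 = 1 := by
    rw [hdef, zero_smul, neg_zero, NormedSpace.exp_zero, hΨ0, one_mul]
  have hh1 : h 1 = 1 := by
    letI : NormedAlgebra ℚ A := .restrictScalars ℚ ℝ A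
    rw [hdef, one_smul, ← hL, ← NormedSpace.exp_add_of_commute ((Commute.refl L).neg_right),
      add_neg_cancel, NormedSpace.exp_zero]
  have hhu : ∀ θ ∈ Icc (0:ℝ) 1, IsUnit (h θ) := by
    intro θ hθ
    rw [hdef]
    letI : NormedAlgebra ℚ A := .restrictScalars ℚ ℝ A
    exact (hΨu θ hθ).mul (NormedSpace.isUnit_exp _)
  refine ⟨hhu, hh0, hh1, fun θ => -(η θ * h θ) - h θ * L, ?_, ?_⟩
  · intro θ hθ
    have he : HasDerivWithinAt (fun u : ℝ => NormedSpace.exp (u • (-L)))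
        (NormedSpace.exp (θ • (-L)) * (-L)) (Icc (0:ℝ) 1) θ :=
      (hasDerivAt_exp_smul_const (-L) θ).hasDerivWithinAt
    have hm := (hΨ θ hθ).mul he
    have hm' : HasDerivWithinAt h
        (-(η θ * Ψ θ) * NormedSpace.exp (θ • (-L)) +
          Ψ θ * (NormedSpace.exp (θ • (-L)) * (-L))) (Icc (0:ℝ) 1) θ :=
      hm.congr (fun x _ => hfun x) (hfun θ)
    have hval : -(η θ * h θ) - h θ * L =
        -(η θ * Ψ θ) * NormedSpace.exp (θ • (-L)) +
          Ψ θ * (NormedSpace.exp (θ • (-L)) * (-L)) := by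
      rw [hfun θ]; noncomm_ring
    show HasDerivWithinAt h (-(η θ * h θ) - h θ * L) (Icc (0:ℝ) 1) θ
    rw [hval]
    exact hm'
  · intro θ hθ
    show Ring.inverse (h θ) * η θ * h θ +
        Ring.inverse (h θ) * (-(η θ * h θ) - h θ * L) = -L
    have hu := hhu θ hθ
    have h1 : Ring.inverse (h θ) * h θ = 1 := Ring.inverse_mul_cancel _ hu
    have key : Ring.inverse (h θ) * η θ * h θ +
        Ring.inverse (h θ) * (-(η θ * h θ) - h θ * L) =
        -(Ring.inverse (h θ) * h θ * L) := by noncomm_ring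
    rw [key, h1, one_mul]
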